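/- Let a > 4, let Q(X) = a·X²·(1 − X) − X, and let c₋ = 1/2 − √(1/4 − 1/a). If u : [0, ∞) → ℝ is differentiable with u'(t) = Q(u(t)) for all t ≥ 0 and u(0) ∈ (0, c₋), then u(t) → 0 as t → ∞. -/

import Mathlib

open Set Filter Real Topology

theorem stmt_1 (a : ℝ) (ha : 4 < a)
    (Q : ℝ → ℝ) (hQ : ∀ X, Q X = a * X ^ 2 * (1 - X) - X)
    (cm : ℝ) (hcm : cm = 1 / 2 - Real.sqrt (1 / 4 - 1 / a))
    (u : ℝ → ℝ)
    (hderiv : ∀ t : ℝ, 0 ≤ t → HasDerivAt u (Q (u t)) t)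
    (h0 : u 0 ∈ Set.Ioo (0 : ℝ) cm) :
    Filter.Tendsto u Filter.atTop (nhds 0) := by
  obtain ⟨hu0pos, hu0cm⟩ := h0
  set u0 := u 0 with hu0def
  have ha0 : (0:ℝ) < a := by linarith
  have hq : (0:ℝ) < 1/4 - 1/a := by
    have : 1/a < 1/4 := by
      rw [div_lt_div_iff₀ ha0 (by norm_num)]; linarith
    linarith
  have hs2 : Real.sqrt (1/4 - 1/a) ^ 2 = 1/4 - 1/a := Real.sq_sqrt hq.le
  have hcm1 : a * cm * (1 - cm) = 1 := by
    have hane : a ≠ 0 := ne_of_gt ha0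
    have hs2' : a * Real.sqrt (1/4 - 1/a) ^ 2 = a / 4 - 1 := by
      rw [hs2]; field_simp
    rw [hcm]
    linear_combination (-1 : ℝ) * hs2'
  have hcmhalf : cm < 1/2 := by
    have := Real.sqrt_pos.mpr hq
    rw [hcm]; linarith
  set m : ℝ := (u0 + cm)/2 with hm
  have hmu0 : u0 < m := by rw [hm]; linarith
  have hmcm : m < cm := by rw [hm]; linarith
  have hm0 : 0 < m := by linarith
  have hmhalf : m < 1/2 := by linarith
  set lam : ℝ := 1 - a*m*(1-m) with hlam
  have hlampos : 0 < lam := by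
    have h1 : 0 < 1 - cm - m := by linarith
    have h2 : 0 < a * ((cm - m) * (1 - cm - m)) :=
      mul_pos ha0 (mul_pos (by linarith) h1)
    nlinarith [hcm1]
  have hlamle : lam ≤ 1 := by
    rw [hlam]; nlinarith [mul_nonneg (mul_nonneg ha0.le hm0.le) (by linarith : (0:ℝ) ≤ 1 - m)]
  -- pointwise sign facts
  have hQx1 : ∀ x : ℝ, 0 ≤ x → x ≤ m → 0 ≤ Q x + x := by
    intro x hx0 hxm
    rw [hQ]
    nlinarith [sq_nonneg x, mul_nonneg (mul_nonneg ha0.le (sq_nonneg x)) (by linarith : (0:ℝ) ≤ 1 - x)]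
  have hQx2 : ∀ x : ℝ, 0 ≤ x → x ≤ m → Q x + lam * x ≤ 0 := by
    intro x hx0 hxm
    rw [hQ, hlam]
    nlinarith [mul_nonneg (mul_nonneg ha0.le hx0) (mul_nonneg (by linarith : (0:ℝ) ≤ m - x) (by linarith : (0:ℝ) ≤ 1 - x - m))]
  have hcont : ∀ t : ℝ, 0 ≤ t → ContinuousAt u t := fun t ht => (hderiv t ht).continuousAt
  -- key monotonicity lemma
  have key : ∀ c : ℝ, 0 ≤ c → (∀ s ∈ Icc (0:ℝ) c, u s ∈ Icc 0 m) →
      ∀ t ∈ Icc (0:ℝ) c, u0 * Real.exp (-t) ≤ u t ∧ u t ≤ u0 * Real.exp (-(lam*t)) := by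
    intro c hc hmem
    have hcontOn : ContinuousOn u (Icc 0 c) := fun t ht =>
      ((hderiv t ht.1).continuousAt).continuousWithinAt
    have hint : interior (Icc (0:ℝ) c) = Ioo 0 c := interior_Icc
    have hH : ∀ t ∈ Ioo (0:ℝ) c, HasDerivAt (fun t => u t * Real.exp t)
        ((Q (u t) + u t) * Real.exp t) t := by
      intro t ht
      have h1 := (hderiv t ht.1.le).mul (Real.hasDerivAt_exp t)
      exact h1.congr_deriv (by ring)
    have hG : ∀ t ∈ Ioo (0:ℝ) c, HasDerivAt (fun t => u t * Real.exp (lam*t))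
        ((Q (u t) + lam * u t) * Real.exp (lam*t)) t := by
      intro t ht
      have hlin : HasDerivAt (fun t : ℝ => lam * t) lam t := by
        simpa using (hasDerivAt_id t).const_mul lam
      have h1 := (hderiv t ht.1.le).mul hlin.exp
      exact h1.congr_deriv (by ring)
    have hmono : MonotoneOn (fun t => u t * Real.exp t) (Icc 0 c) := by
      apply monotoneOn_of_deriv_nonneg (convex_Icc 0 c)
      · exact hcontOn.mul Real.continuous_exp.continuousOn
      · rw [hint]; intro x hx
        exact (hH x hx).differentiableAt.differentiableWithinAt
      · rw [hint]; intro x hx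
        rw [(hH x hx).deriv]
        have hux := hmem x ⟨hx.1.le, hx.2.le⟩
        exact mul_nonneg (hQx1 _ hux.1 hux.2) (Real.exp_pos x).le
    have hanti : AntitoneOn (fun t => u t * Real.exp (lam*t)) (Icc 0 c) := by
      apply antitoneOn_of_deriv_nonpos (convex_Icc 0 c)
      · exact hcontOn.mul (Real.continuous_exp.comp (continuous_const.mul continuous_id)).continuousOn
      · rw [hint]; intro x hx
        exact (hG x hx).differentiableAt.differentiableWithinAt
      · rw [hint]; intro x hx
        rw [(hG x hx).deriv]
        have hux := hmem x ⟨hx.1.le, hx.2.le⟩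
        exact mul_nonpos_of_nonpos_of_nonneg (hQx2 _ hux.1 hux.2) (Real.exp_pos _).le
    intro t ht
    have h0m : (0:ℝ) ∈ Icc (0:ℝ) c := ⟨le_refl 0, hc⟩
    constructor
    · have h1 := hmono h0m ht ht.1
      simp only [Real.exp_zero, mul_one] at h1
      have h3 := mul_le_mul_of_nonneg_right h1 (Real.exp_pos (-t)).le
      rw [mul_assoc, show Real.exp t * Real.exp (-t) = 1 by rw [← Real.exp_add]; simp,
        mul_one] at h3
      exact h3
    · have h1 := hanti h0m ht ht.1
      simp only [mul_zero, Real.exp_zero, mul_one] at h1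
      have h3 := mul_le_mul_of_nonneg_right h1 (Real.exp_pos (-(lam*t))).le
      rw [mul_assoc, show Real.exp (lam*t) * Real.exp (-(lam*t)) = 1 by rw [← Real.exp_add]; simp,
        mul_one] at h3
      exact h3
  -- the invariant set
  set S : Set ℝ := {t | ∀ s ∈ Icc (0:ℝ) t, u0 * Real.exp (-s) ≤ u s ∧ u s ≤ u0 * Real.exp (-(lam*s))}
    with hSdef
  have h0S : (0:ℝ) ∈ S := by
    intro s hs
    have hs0 : s = 0 := le_antisymm hs.2 hs.1
    subst hs0
    simp [hu0def]
  have hSc : IsClosed S := by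
    rw [← isOpen_compl_iff]
    rw [isOpen_iff_mem_nhds]
    intro t ht
    simp only [hSdef, mem_compl_iff, mem_setOf_eq, not_forall] at ht
    obtain ⟨s, hs, hbad⟩ := ht
    have hbad' : u s < u0 * Real.exp (-s) ∨ u0 * Real.exp (-(lam*s)) < u s := by
      by_cases h : u0 * Real.exp (-s) ≤ u s
      · right
        by_contra h2
        exact hbad ⟨h, not_lt.mp h2⟩
      · left; exact not_le.mp h
    have hs0 : 0 < s := by
      rcases lt_or_eq_of_le hs.1 with h | h
      · exact h
      · exfalso; apply hbad; subst h; simp [hu0def]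
    have hcs : ContinuousAt u s := hcont s hs.1
    have hW : ∀ᶠ z in 𝓝 s, (u z < u0 * Real.exp (-z) ∨ u0 * Real.exp (-(lam*z)) < u z) ∧ 0 < z := by
      have hz : ∀ᶠ z in 𝓝 s, 0 < z := eventually_gt_nhds hs0
      have hcL : ContinuousAt (fun z : ℝ => u0 * Real.exp (-z)) s :=
        (continuous_const.mul (Real.continuous_exp.comp continuous_neg)).continuousAt
      have hcU : ContinuousAt (fun z : ℝ => u0 * Real.exp (-(lam*z))) s :=
        (continuous_const.mul (Real.continuous_exp.comp
          (continuous_const.mul continuous_id).neg)).continuousAt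
      rcases hbad' with h | h
      · have := hcs.eventually_lt hcL h
        filter_upwards [this, hz] with z h1 h2 using ⟨Or.inl h1, h2⟩
      · have := hcU.eventually_lt hcs h
        filter_upwards [this, hz] with z h1 h2 using ⟨Or.inr h1, h2⟩
    have hfreq : ∃ s', s' < s ∧ (u s' < u0 * Real.exp (-s') ∨ u0 * Real.exp (-(lam*s')) < u s') ∧ 0 < s' := by
      have h1 : ∀ᶠ z in 𝓝[<] s, ((u z < u0 * Real.exp (-z) ∨ u0 * Real.exp (-(lam*z)) < u z) ∧ 0 < z) ∧ z < s := by
        filter_upwards [hW.filter_mono nhdsWithin_le_nhds, self_mem_nhdsWithin] with z h1 h2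
        exact ⟨h1, h2⟩
      obtain ⟨s', hs'⟩ := h1.exists
      exact ⟨s', hs'.2, hs'.1⟩
    obtain ⟨s', hs's, hbad2, hs'0⟩ := hfreq
    have hnbhd : Ioi s' ∈ 𝓝 t := isOpen_Ioi.mem_nhds (lt_of_lt_of_le hs's hs.2)
    apply mem_of_superset hnbhd
    intro t' ht'
    simp only [hSdef, mem_compl_iff, mem_setOf_eq, not_forall]
    refine ⟨s', ⟨hs'0.le, le_of_lt ht'⟩, ?_⟩
    intro hgood
    rcases hbad2 with h | h
    · linarith [hgood.1]
    · linarith [hgood.2]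
  have main : ∀ b : ℝ, 0 ≤ b → b ∈ S := by
    intro b hb
    have hsub : Icc (0:ℝ) b ⊆ S := by
      apply IsClosed.Icc_subset_of_forall_exists_gt (hSc.inter isClosed_Icc) h0S
      intro x hx y hy
      have hxS := hx.1
      have hx0 := hx.2.1
      have hbx := hxS x ⟨hx0, le_refl x⟩
      have hux0 : 0 < u x := lt_of_lt_of_le (by positivity) hbx.1
      have huxm : u x < m := by
        have h1 : Real.exp (-(lam*x)) ≤ 1 :=
          Real.exp_le_one_iff.mpr (neg_nonpos.mpr (mul_nonneg hlampos.le hx0))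
        have h2 : u0 * Real.exp (-(lam*x)) ≤ u0 := mul_le_of_le_one_right hu0pos.le h1
        linarith [hbx.2]
      have hev : ∀ᶠ z in 𝓝 x, u z ∈ Ioo 0 m :=
        (hcont x hx0).preimage_mem_nhds (isOpen_Ioo.mem_nhds ⟨hux0, huxm⟩)
      obtain ⟨δ, hδpos, hball⟩ := Metric.eventually_nhds_iff.mp hev
      set z := min (x + δ/2) y with hz
      have hzx : x < z := lt_min (by linarith) hy
      have hzy : z ≤ y := min_le_right _ _
      have hz0 : 0 ≤ z := le_of_lt (lt_of_le_of_lt hx0 hzx)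
      have hmem : ∀ s ∈ Icc (0:ℝ) z, u s ∈ Icc 0 m := by
        intro s hs
        by_cases hsx : s ≤ x
        · have hbs := hxS s ⟨hs.1, hsx⟩
          constructor
          · exact le_trans (by positivity) hbs.1
          · have h1 : Real.exp (-(lam*s)) ≤ 1 :=
              Real.exp_le_one_iff.mpr (neg_nonpos.mpr (mul_nonneg hlampos.le hs.1))
            have h2 : u0 * Real.exp (-(lam*s)) ≤ u0 := mul_le_of_le_one_right hu0pos.le h1
            linarith [hbs.2]
        · push_neg at hsx
          have hdist : dist s x < δ := by
            rw [Real.dist_eq, abs_of_pos (by linarith)]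
            have : z ≤ x + δ/2 := min_le_left _ _
            linarith [hs.2]
          have := hball hdist
          exact ⟨this.1.le, this.2.le⟩
      refine ⟨z, ?_, hzx, hzy⟩
      intro s hs
      exact key z hz0 hmem s hs
    exact hsub ⟨hb, le_refl b⟩
  -- conclude by squeezing
  have hub : ∀ᶠ t in atTop, u t ≤ u0 * Real.exp (-(lam*t)) := by
    filter_upwards [eventually_ge_atTop (0:ℝ)] with t ht
    exact (main t ht t ⟨ht, le_refl t⟩).2
  have hlb : ∀ᶠ t in atTop, (0:ℝ) ≤ u t := by
    filter_upwards [eventually_ge_atTop (0:ℝ)] with t ht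
    exact le_trans (by positivity) (main t ht t ⟨ht, le_refl t⟩).1
  have hU0 : Tendsto (fun t : ℝ => u0 * Real.exp (-(lam*t))) atTop (𝓝 0) := by
    have h1 : Tendsto (fun t : ℝ => lam * t) atTop atTop :=
      tendsto_id.const_mul_atTop hlampos
    have h2 : Tendsto (fun t : ℝ => Real.exp (-(lam*t))) atTop (𝓝 0) :=
      Real.tendsto_exp_neg_atTop_nhds_zero.comp h1
    simpa using h2.const_mul u0
  exact tendsto_of_tendsto_of_tendsto_of_le_of_le' tendsto_const_nhds hU0 hlb hub
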